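/- The classical result specialized at θ=1: the number of permutations of {1,...,N} won by the strategy rejecting the first k ≥ 1 candidates and accepting the next left-to-right maximum equals k·(N−1)!·Σ_{i=k}^{N−1} 1/i. -/

import Mathlib

/-- Number of left-to-right maxima of the permutation `π` (one-line notation
`i ↦ π i`): positions `j` such that `π i < π j` for all `i < j`. -/
def lrmaxCount {N : ℕ} (π : Equiv.Perm (Fin N)) : ℕ :=
  (Finset.univ.filter (fun j : Fin N => ∀ i, i < j → π i < π j)).card

/-- Number of inversions of `π`: pairs of positions `i < j` with `π i > π j`. -/
def invCount {N : ℕ} (π : Equiv.Perm (Fin N)) : ℕ :=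
  (Finset.univ.filter (fun p : Fin N × Fin N => p.1 < p.2 ∧ π p.2 < π p.1)).card

/-- Position `j` is a left-to-right maximum of `π`. -/
def IsLRMax {N : ℕ} (π : Equiv.Perm (Fin N)) (j : Fin N) : Prop :=
  ∀ i, i < j → π i < π j

/-- `π` is `k`-winnable: the positional strategy that rejects the first `k`
candidates (positions `0,…,k-1`) and accepts the next left-to-right maximum
thereafter selects the position of the maximal value. -/
def KWinnable {N : ℕ} (k : ℕ) (π : Equiv.Perm (Fin N)) : Prop :=
  ∃ j : Fin N, k ≤ (j : ℕ) ∧ IsLRMax π j ∧ (∀ i, π i ≤ π j) ∧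
    ∀ i : Fin N, k ≤ (i : ℕ) → i < j → ¬ IsLRMax π i

open Classical in
/-- Ewens-weighted count of `k`-winnable permutations:
`W(N,k) = Σ_{k-winnable π ∈ S_N} θ^{lrmax(π)}`. -/
noncomputable def W (R : Type*) [CommRing R] (N k : ℕ) (θ : R) : R :=
  ∑ π ∈ Finset.univ.filter (fun π : Equiv.Perm (Fin N) => KWinnable k π),
    θ ^ lrmaxCount π


set_option maxHeartbeats 1000000

open Finset Equiv

namespace SecAux

variable {n : ℕ}

/-- The set of permutations with a given value at position `j`. -/
def fib (n : ℕ) (j t : Fin (n+1)) : Finset (Perm (Fin (n+1))) :=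
  univ.filter fun π => π j = t

lemma fib_card_eq (j t t' : Fin (n+1)) : (fib n j t).card = (fib n j t').card := by
  apply Finset.card_nbij' (fun π => Equiv.swap t t' * π) (fun π => Equiv.swap t t' * π)
  · intro π hπ
    simp only [fib, mem_coe, mem_filter, mem_univ, true_and] at hπ ⊢
    simp [hπ]
  · intro π hπ
    simp only [fib, mem_coe, mem_filter, mem_univ, true_and] at hπ ⊢
    simp [hπ, Equiv.swap_comm t t']
  · intro π hπ; simp [← mul_assoc]
  · intro π hπ; simp [← mul_assoc]

lemma fib_card (j t : Fin (n+1)) : (fib n j t).card = n.factorial := by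
  have h1 : (univ : Finset (Perm (Fin (n+1)))).card
      = ∑ t' : Fin (n+1), (fib n j t').card := by
    simp only [fib]
    exact Finset.card_eq_sum_card_fiberwise (f := fun π : Perm (Fin (n+1)) => π j) (fun x _ => mem_univ _)
  have h2 : ∑ t' : Fin (n+1), (fib n j t').card = (n+1) * (fib n j t).card := by
    rw [Finset.sum_congr rfl (fun t' _ => fib_card_eq j t' t)]
    simp [mul_comm]
  have h3 : (univ : Finset (Perm (Fin (n+1)))).card = (n+1).factorial := by
    simp [Finset.card_univ, Fintype.card_perm, Fintype.card_fin]
  rw [h3, h2, Nat.factorial_succ] at h1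
  exact (Nat.eq_of_mul_eq_mul_left (Nat.succ_pos n) h1).symm

/-- Permutations with global max at position `j` and prefix argmax (over `i < j`) at `m`. -/
def B (n : ℕ) (j m : Fin (n+1)) : Finset (Perm (Fin (n+1))) :=
  univ.filter fun π => (∀ i, π i ≤ π j) ∧ ∀ i, i < j → i ≠ m → π i < π m

lemma B_card_eq (j m m' : Fin (n+1)) (hm : m < j) (hm' : m' < j) :
    (B n j m).card = (B n j m').card := by
  rcases eq_or_ne m m' with rfl | hne
  · rfl
  have key : ∀ (a b : Fin (n+1)), a < j → b < j → a ≠ b →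
      ∀ π ∈ B n j a, π * Equiv.swap a b ∈ B n j b := by
    intro a b ha hb hab π hπ
    simp only [B, mem_filter, mem_univ, true_and, Perm.mul_apply] at hπ ⊢
    obtain ⟨h1, h2⟩ := hπ
    have hja : j ≠ a := (ne_of_gt ha)
    have hjb : j ≠ b := (ne_of_gt hb)
    refine ⟨?_, ?_⟩
    · intro i
      rw [Equiv.swap_apply_of_ne_of_ne hja hjb]
      exact h1 _
    · intro i hi hib
      rw [Equiv.swap_apply_right]
      rcases eq_or_ne i a with rfl | hia
      · rw [Equiv.swap_apply_left]
        exact h2 b hb hab.symm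
      · rw [Equiv.swap_apply_of_ne_of_ne hia hib]
        exact h2 i hi hia
  apply Finset.card_nbij' (fun π => π * Equiv.swap m m') (fun π => π * Equiv.swap m m')
  · exact fun π hπ => key m m' hm hm' hne π hπ
  · intro π hπ
    rw [Equiv.swap_comm]
    exact key m' m hm' hm hne.symm π hπ
  · intro π hπ; simp [mul_assoc]
  · intro π hπ; simp [mul_assoc]

lemma B_disjoint (j : Fin (n+1)) :
    Set.PairwiseDisjoint ↑(univ.filter (· < j)) (B n j) := by
  intro m hm m' hm' hne
  simp only [mem_coe, mem_filter, mem_univ, true_and] at hm hm'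
  refine Finset.disjoint_left.2 fun π h1 h2 => ?_
  simp only [B, mem_filter, mem_univ, true_and] at h1 h2
  have ha := h1.2 m' hm' (Ne.symm hne)
  have hb := h2.2 m hm hne
  exact absurd ha (lt_asymm hb)

lemma biUnion_B (j : Fin (n+1)) (hj : (0:ℕ) < (j:ℕ)) :
    (univ.filter (· < j)).biUnion (B n j)
      = univ.filter (fun π : Perm (Fin (n+1)) => ∀ i, π i ≤ π j) := by
  ext π
  simp only [mem_biUnion, mem_filter, mem_univ, true_and, B]
  constructor
  · rintro ⟨m, hm, hmax, _⟩; exact hmax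
  · intro hmax
    have hne : (univ.filter (· < j)).Nonempty := by
      refine ⟨⟨0, Nat.succ_pos n⟩, ?_⟩
      simp only [mem_filter, mem_univ, true_and]
      exact Fin.lt_def.2 hj
    obtain ⟨m, hm, hmax'⟩ := Finset.exists_max_image _ (fun i => π i) hne
    simp only [mem_filter, mem_univ, true_and] at hm
    refine ⟨m, by simp [hm], hmax, fun i hi hne' => ?_⟩
    have hle : π i ≤ π m := hmax' i (by simp [hi])
    exact lt_of_le_of_ne hle (fun h => hne' (π.injective h))

lemma card_filter_lt (j : Fin (n+1)) : (univ.filter (· < j)).card = (j:ℕ) := by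
  have : (univ.filter (· < j)) = Finset.Iio j := by ext i; simp
  rw [this, Fin.card_Iio]

lemma top_fiber_eq (j : Fin (n+1)) :
    (univ.filter (fun π : Perm (Fin (n+1)) => ∀ i, π i ≤ π j)) = fib n j (Fin.last n) := by
  ext π
  simp only [fib, mem_filter, mem_univ, true_and]
  constructor
  · intro h
    have h1 : π j ≤ Fin.last n := Fin.le_last _
    have h2 : Fin.last n ≤ π j := by
      have := h (π.symm (Fin.last n))
      simpa using this
    exact le_antisymm h1 h2
  · intro h i; rw [h]; exact Fin.le_last _

lemma sum_B (j : Fin (n+1)) (hj : (0:ℕ) < (j:ℕ)) :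
    (j:ℕ) * (B n j ⟨0, Nat.succ_pos n⟩).card = n.factorial := by
  have h0 : (⟨0, Nat.succ_pos n⟩ : Fin (n+1)) < j := Fin.lt_def.2 hj
  have hcard : ((univ.filter (· < j)).biUnion (B n j)).card
      = ∑ m ∈ univ.filter (· < j), (B n j m).card :=
    Finset.card_biUnion (B_disjoint j)
  rw [biUnion_B j hj, top_fiber_eq j, fib_card] at hcard
  rw [Finset.sum_congr rfl (fun m hm => by
    simp only [mem_filter, mem_univ, true_and] at hm
    exact B_card_eq j m _ hm h0)] at hcard
  rw [Finset.sum_const, smul_eq_mul, card_filter_lt] at hcard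
  omega

open Classical in
noncomputable def A (n k : ℕ) (j : Fin (n+1)) : Finset (Perm (Fin (n+1))) :=
  univ.filter fun π => (∀ i, π i ≤ π j) ∧
    ∀ m : Fin (n+1), k ≤ (m:ℕ) → m < j → ¬ IsLRMax π m

open Classical in
lemma win_eq (k : ℕ) :
    (univ.filter fun π : Perm (Fin (n+1)) => KWinnable k π)
      = (univ.filter fun j : Fin (n+1) => k ≤ (j:ℕ)).biUnion (A n k) := by
  ext π
  simp only [mem_filter, mem_univ, true_and, mem_biUnion]
  simp only [A, KWinnable, mem_filter, mem_univ, true_and]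
  constructor
  · rintro ⟨j, hkj, _, hmax, hnone⟩
    exact ⟨j, hkj, hmax, hnone⟩
  · rintro ⟨j, hkj, hmax, hnone⟩
    refine ⟨j, hkj, fun i hi => ?_, hmax, hnone⟩
    exact lt_of_le_of_ne (hmax i) (fun h => absurd (π.injective h) (ne_of_lt hi))

lemma A_disjoint (k : ℕ) :
    Set.PairwiseDisjoint ↑(univ.filter fun j : Fin (n+1) => k ≤ (j:ℕ)) (A n k) := by
  intro j hj j' hj' hne
  refine Finset.disjoint_left.2 fun π h1 h2 => ?_
  simp only [A, mem_filter, mem_univ, true_and] at h1 h2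
  exact hne (π.injective (le_antisymm (h2.1 j) (h1.1 j')))

lemma A_eq_biUnion (k : ℕ) (hk : 1 ≤ k) (j : Fin (n+1)) (hkj : k ≤ (j:ℕ)) :
    A n k j = (univ.filter fun m : Fin (n+1) => (m:ℕ) < k).biUnion (B n j) := by
  ext π
  simp only [A, B, mem_filter, mem_univ, true_and, mem_biUnion]
  constructor
  · rintro ⟨hmax, hnone⟩
    have hne : (univ.filter (· < j)).Nonempty := by
      refine ⟨⟨0, Nat.succ_pos n⟩, ?_⟩
      simp only [mem_filter, mem_univ, true_and]
      exact Fin.lt_def.2 (by simp only [Fin.val_mk]; omega)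
    obtain ⟨m, hm, hmax'⟩ := Finset.exists_max_image _ (fun i => π i) hne
    simp only [mem_filter, mem_univ, true_and] at hm
    have harg : ∀ i, i < j → i ≠ m → π i < π m := fun i hi hne' =>
      lt_of_le_of_ne (hmax' i (by simp [hi])) (fun h => hne' (π.injective h))
    have hmk : (m:ℕ) < k := by
      by_contra hge
      exact hnone m (by omega) hm (fun i hi => harg i (hi.trans hm) (ne_of_lt hi))
    exact ⟨m, hmk, hmax, harg⟩
  · rintro ⟨m, hmk, hmax, harg⟩
    have hmj : m < j := Fin.lt_def.2 (by omega)
    refine ⟨hmax, fun m' hkm' hm'j hlr => ?_⟩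
    have h1 : π m' < π m := harg m' hm'j (by intro h; subst h; omega)
    have h2 : π m < π m' := hlr m (Fin.lt_def.2 (by omega))
    exact absurd h1 (lt_asymm h2)

lemma card_filter_lt_k (k : ℕ) (hkn : k ≤ n + 1) :
    (univ.filter fun m : Fin (n+1) => (m:ℕ) < k).card = k := by
  rcases Nat.lt_or_ge k (n+1) with h | h
  · have : (univ.filter fun m : Fin (n+1) => (m:ℕ) < k) = Finset.Iio ⟨k, h⟩ := by
      ext i; simp [Fin.lt_def]
    rw [this, Fin.card_Iio]
  · have hk : k = n + 1 := le_antisymm hkn h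
    subst hk
    have : (univ.filter fun m : Fin (n+1) => (m:ℕ) < n + 1) = univ := by
      ext i; simp [i.isLt]; have := i.isLt; omega
    rw [this, Finset.card_univ, Fintype.card_fin]

open Classical in
lemma A_card (k : ℕ) (hk : 1 ≤ k) (j : Fin (n+1)) (hkj : k ≤ (j:ℕ)) :
    (A n k j).card = k * (B n j ⟨0, Nat.succ_pos n⟩).card := by
  rw [A_eq_biUnion k hk j hkj]
  rw [Finset.card_biUnion]
  · rw [Finset.sum_congr rfl (fun m hm => by
      simp only [mem_filter, mem_univ, true_and] at hm
      exact B_card_eq j m ⟨0, Nat.succ_pos n⟩ (Fin.lt_def.2 (by omega))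
        (Fin.lt_def.2 (by simp only [Fin.val_mk]; omega)))]
    rw [Finset.sum_const, smul_eq_mul, card_filter_lt_k k (by omega)]
  · intro m hm m' hm' hne
    simp only [mem_coe, mem_filter, mem_univ, true_and] at hm hm'
    refine Finset.disjoint_left.2 fun π h1 h2 => ?_
    simp only [B, mem_filter, mem_univ, true_and] at h1 h2
    have ha := h1.2 m' (Fin.lt_def.2 (by omega)) (Ne.symm hne)
    have hb := h2.2 m (Fin.lt_def.2 (by omega)) hne
    exact absurd ha (lt_asymm hb)

end SecAux

open SecAux in
open Classical in
/-- classical secretary problem count (`θ = 1`): the number of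
permutations of `S_N` won by the strategy that rejects the first `k ≥ 1`
candidates and accepts the next left-to-right maximum is
`k·(N−1)!·Σ_{i=k}^{N−1} 1/i`. -/
theorem classical_secretary_count (N k : ℕ) (hk : 1 ≤ k) (hkN : k < N) :
    (((Finset.univ.filter (fun π : Equiv.Perm (Fin N) => KWinnable k π)).card : ℝ)) =
      (k : ℝ) * (Nat.factorial (N - 1) : ℝ) *
        ∑ i ∈ Finset.Icc k (N - 1), (1 : ℝ) / i := by
  obtain ⟨n, rfl⟩ : ∃ n, N = n + 1 := ⟨N - 1, by omega⟩
  have hn : n + 1 - 1 = n := rfl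
  rw [hn]
  set c : Fin (n+1) → ℕ := fun j => (B n j ⟨0, Nat.succ_pos n⟩).card with hc
  have hwin : (univ.filter fun π : Perm (Fin (n+1)) => KWinnable k π).card
      = ∑ j ∈ univ.filter (fun j : Fin (n+1) => k ≤ (j:ℕ)), k * c j := by
    rw [win_eq k, Finset.card_biUnion (A_disjoint k)]
    exact Finset.sum_congr rfl fun j hj => by
      simp only [mem_filter, mem_univ, true_and] at hj
      exact A_card k hk j hj
  rw [hwin]
  push_cast
  rw [Finset.mul_sum]
  refine Finset.sum_bij (fun j _ => (j:ℕ)) ?_ ?_ ?_ ?_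
  · intro j hj
    simp only [mem_filter, mem_univ, true_and] at hj
    simp only [Finset.mem_Icc]
    exact ⟨hj, by omega⟩
  · intro j hj j' hj' h
    exact Fin.val_injective h
  · intro i hi
    simp only [Finset.mem_Icc] at hi
    exact ⟨⟨i, by omega⟩, by simp [hi.1], rfl⟩
  · intro j hj
    simp only [mem_filter, mem_univ, true_and] at hj
    have hjpos : (0:ℕ) < (j:ℕ) := by omega
    have hsb := sum_B j hjpos
    have hj0 : ((j:ℕ):ℝ) ≠ 0 := by positivity
    have : ((c j : ℕ) : ℝ) = (n.factorial : ℝ) / (j:ℕ) := by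
      rw [eq_div_iff hj0]
      rw [mul_comm]
      exact_mod_cast hsb
    rw [this]
    field_simp
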